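/- Let k be a field and b₀ a positive integer, let R = k[x,y,z], and let I ⊆ R be the ideal generated by m₁ = y² − x^{b₀+2}z, m₂ = zy − x^{2b₀+3}, m₃ = z² − x^{b₀+1}y. Let α : R² → R³ be the R-linear map given by the matrix A with rows (z, x^{b₀+1}), (y, z), (x^{b₀+2}, y), and let β : R³ → R be the R-linear map given by the row vector (m₁, −m₂, m₃). Then the sequence 0 → R² →α R³ →β R → R/I → 0 is exact: α is injective, the kernel of β equals the image of α, and the image of β equals I. -/

import Mathlib

open MvPolynomial

section HBAux

lemma hb_prime_X (k : Type*) [Field k] (i : Fin 2) :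
    Prime (MvPolynomial.X i : MvPolynomial (Fin 2) k) := by
  let e := (renameEquiv k (Equiv.swap i 0)).trans (MvPolynomial.finSuccEquiv k 1)
  have he : e (MvPolynomial.X i) = Polynomial.X := by
    simp [e, rename_X, Equiv.swap_apply_left, finSuccEquiv_X_zero]
  rw [← MulEquiv.prime_iff e.toRingEquiv.toMulEquiv]
  show Prime (e (MvPolynomial.X i))
  rw [he]
  exact Polynomial.prime_X

lemma hb_not_dvd (k : Type*) [Field k] :
    ¬ (MvPolynomial.X 1 : MvPolynomial (Fin 2) k) ∣ MvPolynomial.X 0 := by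
  intro h
  have h2 := map_dvd (MvPolynomial.aeval (R := k) (fun j : Fin 2 => if j = 0 then (1:k) else 0)) h
  simp only [MvPolynomial.aeval_X, if_pos rfl] at h2
  norm_num at h2

lemma hb_m3_irred (k : Type*) [Field k] (b₀ : ℕ) :
    Irreducible ((MvPolynomial.X 2)^2 - (MvPolynomial.X 0)^(b₀+1) * MvPolynomial.X 1 :
      MvPolynomial (Fin 3) k) := by
  set a : MvPolynomial (Fin 2) k := (MvPolynomial.X 1)^2 with ha
  set b : MvPolynomial (Fin 2) k := (MvPolynomial.X 0)^(b₀+1) with hb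
  have hrel : IsRelPrime a b := by
    have h1 : IsRelPrime (MvPolynomial.X 1 : MvPolynomial (Fin 2) k) (MvPolynomial.X 0) :=
      ((hb_prime_X k 1).irreducible.isRelPrime_iff_not_dvd).mpr (hb_not_dvd k)
    exact h1.pow
  have hprim : (Polynomial.C a - Polynomial.C b * Polynomial.X).IsPrimitive := by
    intro r hr
    rw [Polynomial.C_dvd_iff_dvd_coeff] at hr
    have h0 := hr 0
    have h1 := hr 1
    simp only [Polynomial.coeff_sub, Polynomial.coeff_C, Polynomial.coeff_C_mul,
      Polynomial.coeff_X_zero, Polynomial.coeff_X_one] at h0 h1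
    norm_num at h0 h1
    exact hrel h0 h1
  have hinj : Function.Injective
      (algebraMap (MvPolynomial (Fin 2) k) (FractionRing (MvPolynomial (Fin 2) k))) :=
    IsFractionRing.injective _ _
  have hbne : algebraMap (MvPolynomial (Fin 2) k) (FractionRing (MvPolynomial (Fin 2) k)) b ≠ 0 := by
    intro h
    exact pow_ne_zero (b₀+1) (MvPolynomial.X_ne_zero (R := k) (0 : Fin 2))
      (hinj (by rw [h, map_zero]))
  have hK : Irreducible ((Polynomial.C a - Polynomial.C b * Polynomial.X).map
      (algebraMap (MvPolynomial (Fin 2) k) (FractionRing (MvPolynomial (Fin 2) k)))) := by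
    have heq : (Polynomial.C a - Polynomial.C b * Polynomial.X).map
        (algebraMap (MvPolynomial (Fin 2) k) (FractionRing (MvPolynomial (Fin 2) k)))
        = Polynomial.C (-(algebraMap (MvPolynomial (Fin 2) k)
            (FractionRing (MvPolynomial (Fin 2) k)) b)) * Polynomial.X
          + Polynomial.C ((algebraMap (MvPolynomial (Fin 2) k)
            (FractionRing (MvPolynomial (Fin 2) k))) a) := by
      simp only [Polynomial.map_sub, Polynomial.map_mul, Polynomial.map_C, Polynomial.map_X,
        Polynomial.C_neg]
      ring
    rw [heq]
    exact Polynomial.irreducible_of_degree_eq_one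
      (Polynomial.degree_linear (neg_ne_zero.mpr hbne))
  have hp : Irreducible (Polynomial.C a - Polynomial.C b * Polynomial.X) :=
    hprim.irreducible_of_irreducible_map_of_injective hinj hK
  let e := (renameEquiv k (Equiv.swap (0 : Fin 3) 1)).trans (MvPolynomial.finSuccEquiv k 2)
  rw [← MulEquiv.irreducible_iff e.toRingEquiv.toMulEquiv]
  have himg : e.toRingEquiv.toMulEquiv ((MvPolynomial.X 2)^2
      - (MvPolynomial.X 0)^(b₀+1) * MvPolynomial.X 1 : MvPolynomial (Fin 3) k)
      = Polynomial.C a - Polynomial.C b * Polynomial.X := by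
    show e _ = _
    have e2 : e (MvPolynomial.X 2) = Polynomial.C (MvPolynomial.X 1) := by
      have : (Equiv.swap (0 : Fin 3) 1) 2 = 2 := by decide
      have h2 : (2 : Fin 3) = (Fin.succ 1) := by decide
      show (MvPolynomial.finSuccEquiv k 2) ((rename (Equiv.swap (0 : Fin 3) 1)) (MvPolynomial.X 2)) = _
      rw [rename_X, this, h2, finSuccEquiv_X_succ]
    have e0 : e (MvPolynomial.X 0) = Polynomial.C (MvPolynomial.X 0) := by
      have : (Equiv.swap (0 : Fin 3) 1) 0 = 1 := by decide
      have h1 : (1 : Fin 3) = (Fin.succ 0) := by decide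
      show (MvPolynomial.finSuccEquiv k 2) ((rename (Equiv.swap (0 : Fin 3) 1)) (MvPolynomial.X 0)) = _
      rw [rename_X, this, h1, finSuccEquiv_X_succ]
    have e1 : e (MvPolynomial.X 1) = Polynomial.X := by
      have : (Equiv.swap (0 : Fin 3) 1) 1 = 0 := by decide
      show (MvPolynomial.finSuccEquiv k 2) ((rename (Equiv.swap (0 : Fin 3) 1)) (MvPolynomial.X 1)) = _
      rw [rename_X, this, finSuccEquiv_X_zero]
    rw [map_sub, map_mul, map_pow, map_pow, e2, e0, e1, ha, hb,
      Polynomial.C_pow, Polynomial.C_pow]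
  rw [himg]
  exact hp

end HBAux

/-- **The Hilbert–Burch resolution (Equation (4)).**
Let `k` be a field, `b₀ > 0`, `R = k[x,y,z]` and `I = (m₁, m₂, m₃)` the ideal of maximal
minors of the matrix `A` with rows `(z, x^{b₀+1})`, `(y, z)`, `(x^{b₀+2}, y)`.  With
`α : R² → R³` given by `A` and `β : R³ → R` given by `(m₁, −m₂, m₃)`, the sequence
`0 → R² → R³ → R → R/I → 0` is exact: `α` is injective, `ker β = im α`, and `im β = I`.
(Variables: `0 = x`, `1 = y`, `2 = z`.) -/
theorem hilbert_burch_sequence_exact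
    (k : Type*) [Field k] (b₀ : ℕ) (hb₀ : 0 < b₀)
    (x y z m₁ m₂ m₃ : MvPolynomial (Fin 3) k)
    (hx : x = X 0) (hy : y = X 1) (hz : z = X 2)
    (hm₁ : m₁ = y ^ 2 - x ^ (b₀ + 2) * z)
    (hm₂ : m₂ = z * y - x ^ (2 * b₀ + 3))
    (hm₃ : m₃ = z ^ 2 - x ^ (b₀ + 1) * y)
    (α : (Fin 2 → MvPolynomial (Fin 3) k) → (Fin 3 → MvPolynomial (Fin 3) k))
    (hα : α = fun u => ![z * u 0 + x ^ (b₀ + 1) * u 1,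
                         y * u 0 + z * u 1,
                         x ^ (b₀ + 2) * u 0 + y * u 1])
    (β : (Fin 3 → MvPolynomial (Fin 3) k) → MvPolynomial (Fin 3) k)
    (hβ : β = fun w => m₁ * w 0 - m₂ * w 1 + m₃ * w 2) :
    Function.Injective α ∧
    (∀ w : Fin 3 → MvPolynomial (Fin 3) k, β w = 0 ↔ ∃ u, α u = w) ∧
    (∀ r : MvPolynomial (Fin 3) k,
      (∃ w, β w = r) ↔ r ∈ Ideal.span {m₁, m₂, m₃}) := by
  have hirr : Irreducible m₃ := by
    rw [hm₃, hx, hy, hz]; exact hb_m3_irred k b₀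
  have hm₃0 : m₃ ≠ 0 := hirr.ne_zero
  have hndvd : ¬ m₃ ∣ m₁ := by
    rintro ⟨c, hc⟩
    have h2 := congrArg (MvPolynomial.aeval
      (fun j : Fin 3 => if j = 1 then (1 : k) else 0)) hc
    rw [hm₁, hm₃, hx, hy, hz] at h2
    simp only [map_sub, map_mul, map_pow, MvPolynomial.aeval_X] at h2
    norm_num at h2
    rw [if_neg (by decide : ¬ ((2 : Fin 3) = 1))] at h2
    exact one_ne_zero h2
  have hrel : IsRelPrime m₃ m₁ := hirr.isRelPrime_iff_not_dvd.mpr hndvd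
  refine ⟨?_, ?_, ?_⟩
  · -- injectivity
    intro u v huv
    have e0 := congrFun huv 0
    have e1 := congrFun huv 1
    rw [hα] at e0 e1
    simp only [Matrix.cons_val_zero, Matrix.cons_val_one, Matrix.head_cons] at e0 e1
    funext i
    fin_cases i
    · show u 0 = v 0
      refine mul_left_cancel₀ hm₃0 ?_
      rw [hm₃]
      linear_combination z * e0 - x ^ (b₀ + 1) * e1
    · show u 1 = v 1
      refine mul_left_cancel₀ hm₃0 ?_
      rw [hm₃]
      linear_combination z * e1 - y * e0
  · intro w
    constructor
    · intro hw
      rw [hβ] at hw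
      simp only at hw
      rw [hm₁, hm₂, hm₃] at hw
      have hdP : m₃ ∣ (z * w 0 - x ^ (b₀ + 1) * w 1) := by
        refine hrel.dvd_of_dvd_mul_left ⟨y * w 1 - z * w 2, ?_⟩
        rw [hm₁, hm₃]
        linear_combination z * hw
      have hdQ : m₃ ∣ (z * w 1 - y * w 0) := by
        refine hrel.dvd_of_dvd_mul_left ⟨y * w 2 - x ^ (b₀ + 2) * w 1, ?_⟩
        rw [hm₁, hm₃]
        linear_combination (-y) * hw
      obtain ⟨u₀, hu₀⟩ := hdP
      obtain ⟨u₁, hu₁⟩ := hdQ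
      rw [hm₃] at hu₀ hu₁
      refine ⟨![u₀, u₁], ?_⟩
      rw [hα]
      funext i
      fin_cases i
      · show z * u₀ + x ^ (b₀ + 1) * u₁ = w 0
        refine mul_left_cancel₀ hm₃0 ?_
        rw [hm₃]
        linear_combination (-z) * hu₀ - x ^ (b₀ + 1) * hu₁
      · show y * u₀ + z * u₁ = w 1
        refine mul_left_cancel₀ hm₃0 ?_
        rw [hm₃]
        linear_combination (-y) * hu₀ - z * hu₁
      · show x ^ (b₀ + 2) * u₀ + y * u₁ = w 2
        refine mul_left_cancel₀ hm₃0 ?_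
        rw [hm₃]
        linear_combination (-(x ^ (b₀ + 2))) * hu₀ - y * hu₁ - hw
    · rintro ⟨u, rfl⟩
      rw [hβ, hα, hm₁, hm₂, hm₃]
      simp only [Matrix.cons_val_zero, Matrix.cons_val_one, Matrix.head_cons,
        Matrix.cons_val_two, Matrix.tail_cons]
      ring
  · intro r
    constructor
    · rintro ⟨w, rfl⟩
      rw [hβ]
      have h1 : m₁ ∈ Ideal.span {m₁, m₂, m₃} := Ideal.subset_span (by simp)
      have h2 : m₂ ∈ Ideal.span {m₁, m₂, m₃} := Ideal.subset_span (by simp)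
      have h3 : m₃ ∈ Ideal.span {m₁, m₂, m₃} := Ideal.subset_span (by simp)
      exact add_mem (sub_mem (Ideal.mul_mem_right _ _ h1) (Ideal.mul_mem_right _ _ h2))
        (Ideal.mul_mem_right _ _ h3)
    · intro hr
      rw [show ({m₁, m₂, m₃} : Set (MvPolynomial (Fin 3) k))
            = insert m₁ (insert m₂ {m₃}) from rfl] at hr
      rw [Ideal.mem_span_insert] at hr
      obtain ⟨a, r', hr', rfl⟩ := hr
      rw [Ideal.mem_span_insert] at hr'
      obtain ⟨b, r'', hr'', rfl⟩ := hr'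
      rw [Ideal.mem_span_singleton'] at hr''
      obtain ⟨c, rfl⟩ := hr''
      refine ⟨![a, -b, c], ?_⟩
      rw [hβ]
      simp only [Matrix.cons_val_zero, Matrix.cons_val_one, Matrix.head_cons,
        Matrix.cons_val_two, Matrix.tail_cons]
      ring
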